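/- Let W be a nonempty set of channels. For every continuous nondecreasing function F : ℝ → ℝ, every rate R ∈ ℝ and every input pmf p_X, one has E_{r,F}(R, p_X, W) = inf_{R' ∈ ℝ} [ E_sp(R', p_X, W) + F(R' − R) ]; moreover R ↦ E_{r,F}(R, p_X, W) is nonincreasing, and F(t) ≤ G(t) for all t implies E_{r,F}(R, p_X, W) ≤ E_{r,G}(R, p_X, W). -/

import Mathlib

open scoped BigOperators

section Defs

variable {𝒳 𝒴 : Type*} [Fintype 𝒳] [Fintype 𝒴]

/-- `p` is a probability mass function on the finite alphabet `𝒳`. -/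
def IsPMF (p : 𝒳 → ℝ) : Prop := (∀ x, 0 ≤ p x) ∧ ∑ x, p x = 1

/-- A channel assigns to each input letter a pmf on `𝒴`. -/
def IsChannel (W : 𝒳 → 𝒴 → ℝ) : Prop := ∀ x, IsPMF (W x)

/-- Conditional Kullback–Leibler divergence `D(q ‖ W | pX)`, base-2 logarithms. -/
noncomputable def condKL (pX : 𝒳 → ℝ) (q W : 𝒳 → 𝒴 → ℝ) : ℝ :=
  ∑ x, ∑ y, pX x * q x y * Real.logb 2 (q x y / W x y)

/-- Mutual information `I(pX, q)` of the joint pmf `(x, y) ↦ pX x * q x y`. -/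
noncomputable def mutInfo (pX : 𝒳 → ℝ) (q : 𝒳 → 𝒴 → ℝ) : ℝ :=
  ∑ x, ∑ y, pX x * q x y * Real.logb 2 (q x y / ∑ x', pX x' * q x' y)

/-- Modified random-coding exponent `E_{r,F}(R, pX, W)`. -/
noncomputable def ErF (F : ℝ → ℝ) (R : ℝ) (pX : 𝒳 → ℝ) (W : 𝒳 → 𝒴 → ℝ) : ℝ :=
  sInf {v : ℝ | ∃ q : 𝒳 → 𝒴 → ℝ, IsChannel q ∧ v = condKL pX q W + F (mutInfo pX q - R)}

/-- Sphere-packing exponent `E_sp(R, pX, W)`, with value `+∞` if no conditional pmf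
satisfies the mutual-information constraint. -/
noncomputable def EspE (R : ℝ) (pX : 𝒳 → ℝ) (W : 𝒳 → 𝒴 → ℝ) : EReal :=
  sInf {v : EReal | ∃ q : 𝒳 → 𝒴 → ℝ,
    IsChannel q ∧ mutInfo pX q ≤ R ∧ v = (condKL pX q W : EReal)}

/-- `E_{r,F}` for a class of channels (infimum over the class). -/
noncomputable def ErFW (F : ℝ → ℝ) (R : ℝ) (pX : 𝒳 → ℝ) (𝒲 : Set (𝒳 → 𝒴 → ℝ)) : ℝ :=
  sInf {v : ℝ | ∃ p ∈ 𝒲, v = ErF F R pX p}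

/-- `E_sp` for a class of channels (infimum over the class). -/
noncomputable def EspEW (R : ℝ) (pX : 𝒳 → ℝ) (𝒲 : Set (𝒳 → 𝒴 → ℝ)) : EReal :=
  sInf {v : EReal | ∃ p ∈ 𝒲, v = EspE R pX p}

end Defs
set_option linter.unusedSectionVars false
set_option linter.unusedVariables false


lemma mul_log_ge {q : ℝ} (hq : 0 < q) : q - 1 ≤ q * Real.log q := by
  have h := Real.log_le_sub_one_of_pos (x := q⁻¹) (by positivity)
  rw [Real.log_inv] at h
  have h2 := mul_le_mul_of_nonneg_left h hq.le
  rw [mul_sub, mul_inv_cancel₀ (ne_of_gt hq)] at h2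
  nlinarith

lemma term_lb {p q w : ℝ} (hp : 0 ≤ p) (hq0 : 0 ≤ q)
    (hw0 : 0 ≤ w) (hw1 : w ≤ 1) :
    -(p / Real.log 2) ≤ p * q * Real.logb 2 (q / w) := by
  have hlog2 : 0 < Real.log 2 := Real.log_pos one_lt_two
  have hneg : -(p / Real.log 2) ≤ 0 := by
    rw [neg_nonpos]; positivity
  rcases eq_or_lt_of_le hq0 with hq|hq
  · simpa [← hq] using hneg
  rcases eq_or_lt_of_le hw0 with hw|hw
  · simpa [← hw] using hneg
  have h1 : Real.logb 2 w ≤ 0 := Real.logb_nonpos one_lt_two hw0 hw1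
  have h2 : Real.logb 2 q ≤ Real.logb 2 (q / w) := by
    rw [Real.logb_div (ne_of_gt hq) (ne_of_gt hw)]; linarith
  have h3 : p * q * Real.logb 2 q ≤ p * q * Real.logb 2 (q / w) :=
    mul_le_mul_of_nonneg_left h2 (by positivity)
  refine le_trans ?_ h3
  have h5 : -1 ≤ q * Real.log q := by have := mul_log_ge hq; linarith
  have h6 : -p ≤ p * (q * Real.log q) := by nlinarith
  rw [Real.logb]
  calc -(p / Real.log 2) = (-p) / Real.log 2 := by ring
    _ ≤ (p * (q * Real.log q)) / Real.log 2 := by gcongr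
    _ = p * q * (Real.log q / Real.log 2) := by ring

section Bounds
variable {𝒳 𝒴 : Type*} [Fintype 𝒳] [Fintype 𝒴]

lemma pmf_le_one {p : 𝒴 → ℝ} (h : IsPMF p) (y : 𝒴) : p y ≤ 1 := by
  rw [← h.2]
  exact Finset.single_le_sum (fun i _ => h.1 i) (Finset.mem_univ y)

/-- generic lower bound for condKL-type sums -/
lemma condKL_ge {pX : 𝒳 → ℝ} (hpX : IsPMF pX) {q W : 𝒳 → 𝒴 → ℝ}
    (hq : IsChannel q) (hW0 : ∀ x y, 0 ≤ W x y) (hW1 : ∀ x y, W x y ≤ 1) :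
    -((Fintype.card 𝒴 : ℝ) / Real.log 2) ≤ condKL pX q W := by
  have key : ∀ x, ∑ y, (-(pX x / Real.log 2)) ≤ ∑ y, pX x * q x y * Real.logb 2 (q x y / W x y) :=
    fun x => Finset.sum_le_sum (fun y _ =>
      term_lb (hpX.1 x) ((hq x).1 y) (hW0 x y) (hW1 x y))
  have key2 : ∑ x, ∑ y, (-(pX x / Real.log 2)) ≤ condKL pX q W :=
    Finset.sum_le_sum (fun x _ => key x)
  refine le_trans (le_of_eq ?_) key2
  simp only [Finset.sum_const, Finset.card_univ, nsmul_eq_mul]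
  rw [← Finset.mul_sum, Finset.sum_neg_distrib, ← Finset.sum_div, hpX.2]
  ring

lemma mutInfo_ge {pX : 𝒳 → ℝ} (hpX : IsPMF pX) {q : 𝒳 → 𝒴 → ℝ} (hq : IsChannel q) :
    -((Fintype.card 𝒴 : ℝ) / Real.log 2) ≤ mutInfo pX q := by
  have : mutInfo pX q = condKL pX q (fun _ y => ∑ x', pX x' * q x' y) := rfl
  rw [this]
  refine condKL_ge hpX hq (fun x y => ?_) (fun x y => ?_)
  · exact Finset.sum_nonneg fun i _ => mul_nonneg (hpX.1 i) ((hq i).1 y)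
  · calc ∑ x', pX x' * q x' y ≤ ∑ x', pX x' := by
          refine Finset.sum_le_sum fun i _ => ?_
          nlinarith [hpX.1 i, (hq i).1 y, pmf_le_one (hq i) y]
      _ = 1 := hpX.2
end Bounds

section Main
variable {𝒳 𝒴 : Type*} [Fintype 𝒳] [Fintype 𝒴]

lemma ErF_set_lb {pX : 𝒳 → ℝ} (hpX : IsPMF pX) {p : 𝒳 → 𝒴 → ℝ} (hp : IsChannel p)
    {F : ℝ → ℝ} (hFmono : Monotone F) (R : ℝ) :
    ∀ v ∈ {v : ℝ | ∃ q : 𝒳 → 𝒴 → ℝ, IsChannel q ∧ v = condKL pX q p + F (mutInfo pX q - R)},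
      -((Fintype.card 𝒴 : ℝ)/Real.log 2) + F (-((Fintype.card 𝒴 : ℝ)/Real.log 2) - R) ≤ v := by
  rintro v ⟨q, hq, rfl⟩
  have h1 := condKL_ge hpX hq (fun x y => (hp x).1 y) (fun x y => pmf_le_one (hp x) y)
  have h2 := mutInfo_ge hpX hq
  have h3 : F (-((Fintype.card 𝒴 : ℝ)/Real.log 2) - R) ≤ F (mutInfo pX q - R) :=
    hFmono (by linarith)
  linarith

lemma uniform_channel [Nonempty 𝒴] :
    IsChannel (fun (_ : 𝒳) (_ : 𝒴) => ((Fintype.card 𝒴 : ℝ))⁻¹) := by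
  intro x
  constructor
  · intro y; positivity
  · simp only [Finset.sum_const, Finset.card_univ, nsmul_eq_mul]
    rw [mul_inv_cancel₀]
    exact_mod_cast Fintype.card_ne_zero

lemma ErF_set_ne [Nonempty 𝒴] (pX : 𝒳 → ℝ) (p : 𝒳 → 𝒴 → ℝ) (F : ℝ → ℝ) (R : ℝ) :
    {v : ℝ | ∃ q : 𝒳 → 𝒴 → ℝ, IsChannel q ∧
      v = condKL pX q p + F (mutInfo pX q - R)}.Nonempty :=
  ⟨_, _, uniform_channel, rfl⟩

lemma ErF_ge [Nonempty 𝒴] {pX : 𝒳 → ℝ} (hpX : IsPMF pX) {p : 𝒳 → 𝒴 → ℝ} (hp : IsChannel p)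
    {F : ℝ → ℝ} (hFmono : Monotone F) (R : ℝ) :
    -((Fintype.card 𝒴 : ℝ)/Real.log 2) + F (-((Fintype.card 𝒴 : ℝ)/Real.log 2) - R)
      ≤ ErF F R pX p :=
  le_csInf (ErF_set_ne pX p F R) (ErF_set_lb hpX hp hFmono R)

lemma ErF_le {pX : 𝒳 → ℝ} (hpX : IsPMF pX) {p : 𝒳 → 𝒴 → ℝ} (hp : IsChannel p)
    {F : ℝ → ℝ} (hFmono : Monotone F) (R : ℝ) {q : 𝒳 → 𝒴 → ℝ} (hq : IsChannel q) :
    ErF F R pX p ≤ condKL pX q p + F (mutInfo pX q - R) :=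
  csInf_le ⟨_, ErF_set_lb hpX hp hFmono R⟩ ⟨q, hq, rfl⟩

lemma ErFW_set_lb [Nonempty 𝒴] {pX : 𝒳 → ℝ} (hpX : IsPMF pX) {𝒲 : Set (𝒳 → 𝒴 → ℝ)}
    (h𝒲ch : ∀ p ∈ 𝒲, IsChannel p) {F : ℝ → ℝ} (hFmono : Monotone F) (R : ℝ) :
    ∀ v ∈ {v : ℝ | ∃ p ∈ 𝒲, v = ErF F R pX p},
      -((Fintype.card 𝒴 : ℝ)/Real.log 2) + F (-((Fintype.card 𝒴 : ℝ)/Real.log 2) - R) ≤ v := by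
  rintro v ⟨p, hp, rfl⟩
  exact ErF_ge hpX (h𝒲ch p hp) hFmono R

lemma ErFW_le [Nonempty 𝒴] {pX : 𝒳 → ℝ} (hpX : IsPMF pX) {𝒲 : Set (𝒳 → 𝒴 → ℝ)}
    (h𝒲ch : ∀ p ∈ 𝒲, IsChannel p) {F : ℝ → ℝ} (hFmono : Monotone F) (R : ℝ)
    {p : 𝒳 → 𝒴 → ℝ} (hp : p ∈ 𝒲) :
    ErFW F R pX 𝒲 ≤ ErF F R pX p :=
  csInf_le ⟨_, ErFW_set_lb hpX h𝒲ch hFmono R⟩ ⟨p, hp, rfl⟩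

lemma ereal_le_sInf_add {S : Set EReal} {a : EReal} {r : ℝ}
    (h : ∀ v ∈ S, a ≤ v + (r : EReal)) : a ≤ sInf S + (r : EReal) := by
  rw [← EReal.sub_le_iff_le_add (Or.inl (EReal.coe_ne_bot r)) (Or.inl (EReal.coe_ne_top r))]
  exact le_sInf fun v hv =>
    (EReal.sub_le_iff_le_add (Or.inl (EReal.coe_ne_bot r))
      (Or.inl (EReal.coe_ne_top r))).mpr (h v hv)

lemma ereal_le_coe_sInf {S : Set ℝ} (hS : S.Nonempty) {a : EReal}
    (h : ∀ x ∈ S, a ≤ (x : EReal)) : a ≤ ((sInf S : ℝ) : EReal) := by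
  induction a using EReal.rec with
  | bot => exact bot_le
  | coe b =>
      norm_cast
      exact le_csInf hS fun x hx => by exact_mod_cast h x hx
  | top =>
      obtain ⟨x, hx⟩ := hS
      exact absurd (top_le_iff.mp (h x hx)) (EReal.coe_ne_top x)

end Main

/-- For a nonempty set `𝒲` of channels and every continuous nondecreasing
`F`, `E_{r,F}(R,pX,𝒲) = inf_{R'} [E_sp(R',pX,𝒲) + F(R'-R)]`; moreover
`R ↦ E_{r,F}(R,pX,𝒲)` is nonincreasing, and `F ≤ G` pointwise implies
`E_{r,F}(R,pX,𝒲) ≤ E_{r,G}(R,pX,𝒲)`. -/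
theorem ErFW_props {𝒳 𝒴 : Type*} [Fintype 𝒳] [Fintype 𝒴]
    (pX : 𝒳 → ℝ) (hpX : IsPMF pX)
    (𝒲 : Set (𝒳 → 𝒴 → ℝ)) (h𝒲ne : 𝒲.Nonempty) (h𝒲ch : ∀ p ∈ 𝒲, IsChannel p)
    (F : ℝ → ℝ) (hFcont : Continuous F) (hFmono : Monotone F) (R : ℝ) :
    ((ErFW F R pX 𝒲 : EReal) = ⨅ R' : ℝ, (EspEW R' pX 𝒲 + (F (R' - R) : EReal)))
      ∧ Antitone (fun R' : ℝ => ErFW F R' pX 𝒲)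
      ∧ (∀ G : ℝ → ℝ, (∀ t : ℝ, F t ≤ G t) → ErFW F R pX 𝒲 ≤ ErFW G R pX 𝒲) := by
  have h𝒳ne : Nonempty 𝒳 := by
    by_contra h
    rw [not_nonempty_iff] at h
    have := hpX.2
    rw [Finset.univ_eq_empty, Finset.sum_empty] at this
    norm_num at this
  obtain ⟨p0, hp0⟩ := h𝒲ne
  have h𝒴ne : Nonempty 𝒴 := by
    by_contra h
    rw [not_nonempty_iff] at h
    obtain ⟨x⟩ := h𝒳ne
    have := (h𝒲ch p0 hp0 x).2
    rw [Finset.univ_eq_empty, Finset.sum_empty] at this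
    norm_num at this
  refine ⟨?_, ?_, ?_⟩
  · apply le_antisymm
    · refine le_iInf fun R' => ?_
      rw [EspEW]
      refine ereal_le_sInf_add fun v hv => ?_
      obtain ⟨p, hp, rfl⟩ := hv
      rw [EspE]
      refine ereal_le_sInf_add fun w hw => ?_
      obtain ⟨q, hq, hIq, rfl⟩ := hw
      rw [← EReal.coe_add, EReal.coe_le_coe_iff]
      calc ErFW F R pX 𝒲 ≤ ErF F R pX p := ErFW_le hpX h𝒲ch hFmono R hp
        _ ≤ condKL pX q p + F (mutInfo pX q - R) := ErF_le hpX (h𝒲ch p hp) hFmono R hq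
        _ ≤ condKL pX q p + F (R' - R) := by
            have := hFmono (show mutInfo pX q - R ≤ R' - R by linarith)
            linarith
    · rw [ErFW]
      have hne : {v : ℝ | ∃ p ∈ 𝒲, v = ErF F R pX p}.Nonempty := ⟨_, p0, hp0, rfl⟩
      refine ereal_le_coe_sInf hne fun v hv => ?_
      obtain ⟨p, hp, rfl⟩ := hv
      rw [ErF]
      refine ereal_le_coe_sInf (ErF_set_ne pX p F R) fun u hu => ?_
      obtain ⟨q, hq, rfl⟩ := hu
      refine le_trans (iInf_le _ (mutInfo pX q)) ?_
      rw [EReal.coe_add]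
      refine add_le_add ?_ (le_refl _)
      refine le_trans (sInf_le ⟨p, hp, rfl⟩) ?_
      exact sInf_le ⟨q, hq, le_refl _, rfl⟩
  · intro R1 R2 hR
    have hne : {v : ℝ | ∃ p ∈ 𝒲, v = ErF F R1 pX p}.Nonempty := ⟨_, p0, hp0, rfl⟩
    refine le_csInf hne ?_
    rintro v ⟨p, hp, rfl⟩
    refine le_trans (ErFW_le hpX h𝒲ch hFmono R2 hp) ?_
    refine le_csInf (ErF_set_ne pX p F R1) ?_
    rintro u ⟨q, hq, rfl⟩
    refine le_trans (ErF_le hpX (h𝒲ch p hp) hFmono R2 hq) ?_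
    have := hFmono (show mutInfo pX q - R2 ≤ mutInfo pX q - R1 by linarith)
    linarith
  · intro G hFG
    have hne : {v : ℝ | ∃ p ∈ 𝒲, v = ErF G R pX p}.Nonempty := ⟨_, p0, hp0, rfl⟩
    refine le_csInf hne ?_
    rintro v ⟨p, hp, rfl⟩
    refine le_trans (ErFW_le hpX h𝒲ch hFmono R hp) ?_
    refine le_csInf (ErF_set_ne pX p G R) ?_
    rintro u ⟨q, hq, rfl⟩
    refine le_trans (ErF_le hpX (h𝒲ch p hp) hFmono R hq) ?_
    linarith [hFG (mutInfo pX q - R)]
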